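/- Let V₁, V₂ ⊂ ℝ³ be compact disjoint sets and Γᵢ = {(1, v) : v ∈ Vᵢ}. Let K₁, K₂ ⊂ ℝ⁴ be compact with Kᵢ ⊂ ℝ⁴. Then there exist δ > 0 and T₀ such that for all T ≥ T₀, the sets K₁ + T·Γ₁^δ and K₂ + T·Γ₂^δ are spacelike separated, where Γᵢ^δ denotes the closed δ-neighborhood of Γᵢ and T·S = {T s : s ∈ S}; spacelike separation means (x−y)·(x−y) < 0 in the Minkowski metric (+,−,−,−) for all x in one set and y in the other. -/
import Mathlib


open MeasureTheory Filter Pointwise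

set_option maxHeartbeats 1600000 in
/-- Geometric fact behind Lemma 2(a): compact regions carried along
thickened cones over disjoint compact velocity sets become spacelike
separated (in the Minkowski metric `(+,-,-,-)`) for large times. -/
theorem stmt_10 (V₁ V₂ : Set (EuclideanSpace ℝ (Fin 3)))
    (hV₁ : IsCompact V₁) (hV₂ : IsCompact V₂) (hdisj : Disjoint V₁ V₂)
    (K₁ K₂ : Set (ℝ × EuclideanSpace ℝ (Fin 3)))
    (hK₁ : IsCompact K₁) (hK₂ : IsCompact K₂) :
    ∃ δ : ℝ, 0 < δ ∧ ∃ T₀ : ℝ, ∀ T : ℝ, T₀ ≤ T →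
      ∀ x ∈ K₁ + T • Metric.cthickening δ ((fun v => ((1 : ℝ), v)) '' V₁),
      ∀ y ∈ K₂ + T • Metric.cthickening δ ((fun v => ((1 : ℝ), v)) '' V₂),
        (x.1 - y.1) ^ 2 - ‖x.2 - y.2‖ ^ 2 < 0 := by
  rcases V₁.eq_empty_or_nonempty with h1 | h1
  · exact ⟨1, one_pos, 0, fun T _ x hx => by
      simp [h1, Metric.cthickening_empty, Set.smul_set_empty, Set.add_empty] at hx⟩
  rcases V₂.eq_empty_or_nonempty with h2 | h2
  · exact ⟨1, one_pos, 0, fun T _ x _ y hy => by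
      simp [h2, Metric.cthickening_empty, Set.smul_set_empty, Set.add_empty] at hy⟩
  -- minimal distance between the two velocity sets
  obtain ⟨⟨a, b⟩, hab, hmin⟩ := (hV₁.prod hV₂).exists_isMinOn (h1.prod h2)
    (continuous_fst.dist continuous_snd).continuousOn
  set d : ℝ := dist a b with hd_def
  have hd : 0 < d := by
    rw [hd_def, dist_pos]
    intro h
    exact Set.disjoint_left.1 hdisj hab.1 (h ▸ hab.2)
  have hdmin : ∀ v₁ ∈ V₁, ∀ v₂ ∈ V₂, d ≤ dist v₁ v₂ := fun v₁ h₁ v₂ h₂ =>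
    isMinOn_iff.1 hmin (v₁, v₂) (Set.mk_mem_prod h₁ h₂)
  -- bounds on the compact sets
  obtain ⟨C₁, hC₁⟩ := isBounded_iff_forall_norm_le.1 hK₁.isBounded
  obtain ⟨C₂, hC₂⟩ := isBounded_iff_forall_norm_le.1 hK₂.isBounded
  set C : ℝ := max (max C₁ C₂) 0 with hC_def
  have hC0 : 0 ≤ C := le_max_right _ _
  set δ : ℝ := d / 8 with hδ_def
  have hδ : 0 < δ := by positivity
  refine ⟨δ, hδ, 8 * (2 * C + 1) / d, fun T hT x hx y hy => ?_⟩
  have hT0 : 0 ≤ T := le_trans (by positivity) hT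
  -- unpack memberships
  rw [Set.mem_add] at hx hy
  obtain ⟨k₁, hk₁, z₁, hz₁, rfl⟩ := hx
  obtain ⟨k₂, hk₂, z₂, hz₂, rfl⟩ := hy
  rw [Set.mem_smul_set] at hz₁ hz₂
  obtain ⟨g₁, hg₁, rfl⟩ := hz₁
  obtain ⟨g₂, hg₂, rfl⟩ := hz₂
  have hΓ₁ : IsCompact ((fun v => ((1 : ℝ), v)) '' V₁) :=
    hV₁.image (continuous_const.prodMk continuous_id)
  have hΓ₂ : IsCompact ((fun v => ((1 : ℝ), v)) '' V₂) :=
    hV₂.image (continuous_const.prodMk continuous_id)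
  rw [hΓ₁.cthickening_eq_biUnion_closedBall hδ.le] at hg₁
  rw [hΓ₂.cthickening_eq_biUnion_closedBall hδ.le] at hg₂
  simp only [Set.mem_iUnion, Set.mem_image, exists_prop, exists_exists_and_eq_and] at hg₁ hg₂
  obtain ⟨v₁, hv₁, hb₁⟩ := hg₁
  obtain ⟨v₂, hv₂, hb₂⟩ := hg₂
  rw [Metric.mem_closedBall, Prod.dist_eq, max_le_iff] at hb₁ hb₂
  -- component bounds
  have ht₁ : |g₁.1 - 1| ≤ δ := by simpa [Real.dist_eq] using hb₁.1
  have ht₂ : |g₂.1 - 1| ≤ δ := by simpa [Real.dist_eq] using hb₂.1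
  have hs₁ : dist g₁.2 v₁ ≤ δ := hb₁.2
  have hs₂ : dist g₂.2 v₂ ≤ δ := hb₂.2
  have hk₁n : ‖k₁‖ ≤ C := le_trans (hC₁ _ hk₁) (le_trans (le_max_left _ _) (le_max_left _ _))
  have hk₂n : ‖k₂‖ ≤ C := le_trans (hC₂ _ hk₂) (le_trans (le_max_right _ _) (le_max_left _ _))
  -- time coordinate bound
  have htime : |(k₁ + T • g₁).1 - (k₂ + T • g₂).1| ≤ 2 * C + 2 * δ * T := by
    have h1 : (k₁ + T • g₁).1 - (k₂ + T • g₂).1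
        = (k₁.1 - k₂.1) + T * ((g₁.1 - 1) - (g₂.1 - 1)) := by
      simp [Prod.fst_add, Prod.smul_fst, smul_eq_mul]; ring
    rw [h1]
    have hk1 : |k₁.1| ≤ C := le_trans (norm_fst_le k₁) hk₁n
    have hk2 : |k₂.1| ≤ C := le_trans (norm_fst_le k₂) hk₂n
    calc |(k₁.1 - k₂.1) + T * ((g₁.1 - 1) - (g₂.1 - 1))|
        ≤ |k₁.1 - k₂.1| + |T * ((g₁.1 - 1) - (g₂.1 - 1))| := abs_add_le _ _
      _ ≤ (|k₁.1| + |k₂.1|) + |T| * (|g₁.1 - 1| + |g₂.1 - 1|) := by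
          gcongr
          · exact abs_sub _ _
          · rw [abs_mul]
            gcongr
            exact abs_sub _ _
      _ ≤ (C + C) + T * (δ + δ) := by
          rw [abs_of_nonneg hT0]
          gcongr
      _ = 2 * C + 2 * δ * T := by ring
  -- spatial coordinate bound
  have hspace : T * (d - 2 * δ) - 2 * C ≤ ‖(k₁ + T • g₁).2 - (k₂ + T • g₂).2‖ := by
    have hgg : d - 2 * δ ≤ dist g₁.2 g₂.2 := by
      have h := hdmin v₁ hv₁ v₂ hv₂
      have := dist_triangle v₁ g₁.2 v₂
      have := dist_triangle g₁.2 g₂.2 v₂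
      have e1 : dist v₁ g₁.2 = dist g₁.2 v₁ := dist_comm _ _
      have e2 : dist g₂.2 v₂ = dist v₂ g₂.2 := dist_comm _ _
      linarith [dist_triangle v₁ g₁.2 v₂, dist_triangle g₁.2 v₂ g₂.2,
        dist_comm v₁ g₁.2 ▸ hs₁]
    have h1 : (k₁ + T • g₁).2 - (k₂ + T • g₂).2
        = (T • g₁.2 - T • g₂.2) + (k₁.2 - k₂.2) := by
      simp [Prod.snd_add, Prod.smul_snd]; abel
    rw [h1]
    have hTgg : T * (d - 2 * δ) ≤ ‖T • g₁.2 - T • g₂.2‖ := by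
      rw [← smul_sub, norm_smul, Real.norm_eq_abs, abs_of_nonneg hT0]
      have : d - 2 * δ ≤ ‖g₁.2 - g₂.2‖ := by rwa [← dist_eq_norm]
      exact mul_le_mul_of_nonneg_left this hT0
    have hkk : ‖k₁.2 - k₂.2‖ ≤ 2 * C := by
      calc ‖k₁.2 - k₂.2‖ ≤ ‖k₁.2‖ + ‖k₂.2‖ := norm_sub_le _ _
        _ ≤ C + C := add_le_add (le_trans (norm_snd_le k₁) hk₁n)
            (le_trans (norm_snd_le k₂) hk₂n)
        _ = 2 * C := by ring
    calc T * (d - 2 * δ) - 2 * C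
        ≤ ‖T • g₁.2 - T • g₂.2‖ - ‖k₁.2 - k₂.2‖ := by linarith
      _ ≤ ‖(T • g₁.2 - T • g₂.2) + (k₁.2 - k₂.2)‖ := by
          have h := norm_sub_norm_le (T • g₁.2 - T • g₂.2) (-(k₁.2 - k₂.2))
          rw [sub_neg_eq_add, norm_neg] at h
          exact h
  -- combine
  have hTd : 8 * (2 * C + 1) ≤ T * d := by
    rw [div_le_iff₀ hd] at hT
    linarith
  have key : 2 * C + 2 * δ * T < T * (d - 2 * δ) - 2 * C := by
    have : δ = d / 8 := rfl
    nlinarith [hd, hC0, hT0]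
  have habs : |(k₁ + T • g₁).1 - (k₂ + T • g₂).1| < ‖(k₁ + T • g₁).2 - (k₂ + T • g₂).2‖ :=
    lt_of_le_of_lt htime (lt_of_lt_of_le key hspace)
  have h0 : 0 ≤ |(k₁ + T • g₁).1 - (k₂ + T • g₂).1| := abs_nonneg _
  nlinarith [sq_abs ((k₁ + T • g₁).1 - (k₂ + T • g₂).1), habs, h0]
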